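/- Every unitary error basis in dimension 2 is equivalent to the Pauli basis: given any set of four pairwise trace-orthogonal unitary 2×2 matrices {A₁,A₂,A₃,A₄}, there exist unitary matrices A, B ∈ U(2) and unit-modulus scalars c₁,...,c₄ such that {cⱼ A Aⱼ B} equals the set of Pauli matrices. -/

import Mathlib

open Matrix Complex

lemma exists_sqrt (z : ℂ) : ∃ w : ℂ, w^2 = z :=
  ⟨z ^ (((2:ℕ):ℂ))⁻¹, Complex.cpow_nat_inv_pow z two_ne_zero⟩

lemma entry_eq {A B : Matrix (Fin 2) (Fin 2) ℂ} (h : A = B) (i j : Fin 2) : A i j = B i j := by rw [h]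

lemma diag_traceless_unitary (N : Matrix (Fin 2) (Fin 2) ℂ)
    (h1 : Nᴴ * N = 1) (h2 : N * Nᴴ = 1) (htr : N.trace = 0) :
    ∃ (l : ℂ) (W : Matrix (Fin 2) (Fin 2) ℂ), ‖l‖ = 1 ∧ Wᴴ * W = 1 ∧ W * Wᴴ = 1 ∧
      Wᴴ * N * W = l • !![1, 0; 0, -1] := by
  set cj := (starRingEnd ℂ)
  have cjcj : ∀ z : ℂ, cj (cj z) = z := fun z => Complex.conj_conj z
  have cjreal : ∀ x : ℝ, cj ((x:ℝ):ℂ) = ((x:ℝ):ℂ) := fun x => Complex.conj_ofReal x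
  have starcj : ∀ z : ℂ, star z = cj z := fun z => rfl
  set p := N 0 0 with hp0
  set q := N 0 1 with hq0
  set r := N 1 0 with hr0
  have hN11 : N 1 1 = -p := by
    have := htr; rw [Matrix.trace_fin_two] at this; linear_combination this
  have h100 : cj p * p + cj r * r = 1 := by
    have := entry_eq h1 0 0
    simpa [Matrix.mul_apply, Fin.sum_univ_two, Matrix.one_apply] using this
  have h101 : cj p * q + cj r * (-p) = 0 := by
    have := entry_eq h1 0 1
    simpa [Matrix.mul_apply, Fin.sum_univ_two, Matrix.one_apply, hN11] using this
  have h111 : cj q * q + cj p * p = 1 := by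
    have := entry_eq h1 1 1
    simpa [Matrix.mul_apply, Fin.sum_univ_two, Matrix.one_apply, hN11] using this
  have h200 : p * cj p + q * cj q = 1 := by
    have := entry_eq h2 0 0
    simpa [Matrix.mul_apply, Fin.sum_univ_two, Matrix.one_apply] using this
  have h201 : p * cj r + q * (-(cj p)) = 0 := by
    have := entry_eq h2 0 1
    simpa [Matrix.mul_apply, Fin.sum_univ_two, Matrix.one_apply, hN11] using this
  -- determinant has modulus one
  have hdet : cj N.det * N.det = 1 := by
    have : (Nᴴ * N).det = (1 : Matrix (Fin 2) (Fin 2) ℂ).det := by rw [h1]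
    rwa [Matrix.det_mul, Matrix.det_conjTranspose, Matrix.det_one] at this
  have hdet2 : N.det = -(p^2) - q*r := by
    rw [Matrix.det_fin_two, hN11]; ring
  obtain ⟨l, hl⟩ := exists_sqrt (p^2 + q*r)
  have hzz : cj (p^2 + q*r) * (p^2 + q*r) = 1 := by
    rw [hdet2] at hdet
    simp only [map_sub, map_neg, map_pow, map_add, _root_.map_mul] at hdet ⊢
    linear_combination hdet
  have hll : l * cj l = 1 := by
    have hsq : (l * cj l)^2 = 1 := by
      have : cj (l^2) = cj (p^2+q*r) := by rw [hl]
      simp only [map_pow] at this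
      calc (l * cj l)^2 = l^2 * (cj l)^2 := by ring
        _ = 1 := by rw [this, hl]; linear_combination hzz
    have hnn : l * cj l = ((Complex.normSq l : ℝ) : ℂ) := Complex.mul_conj l
    have h1' : ((Complex.normSq l : ℝ) : ℂ)^2 = 1 := by rw [← hnn]; exact hsq
    have h2' : (Complex.normSq l)^2 = 1 := by exact_mod_cast h1'
    have h3' : Complex.normSq l = 1 := by nlinarith [Complex.normSq_nonneg l]
    rw [hnn, h3']; norm_num
  have hlnorm : ‖l‖ = 1 := by
    have : Complex.normSq l = 1 := by
      have hnn : l * cj l = ((Complex.normSq l : ℝ) : ℂ) := Complex.mul_conj l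
      have := hll; rw [hnn] at this; exact_mod_cast this
    have : ‖l‖ ^ 2 = 1 := by rw [Complex.sq_norm]; exact this
    have h0 : (0:ℝ) ≤ ‖l‖ := norm_nonneg l
    have hfac : (‖l‖ - 1) * (‖l‖ + 1) = 0 := by nlinarith
    rcases mul_eq_zero.1 hfac with h | h
    · linarith
    · linarith
  have hln0 : l ≠ 0 := by
    intro h; rw [h] at hlnorm; simp at hlnorm
  have hkey_p : cj p * l^2 = p := by rw [hl]; linear_combination p * h100 + r * h101
  have hkey_r : cj r * l^2 = q := by rw [hl]; linear_combination q * h100 - p * h101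
  have h201c : cj p * r - cj q * p = 0 := by
    have := congrArg cj h201
    simp only [map_add, _root_.map_mul, map_neg, map_zero, cjcj] at this
    linear_combination this
  have hkey_q : cj q * l^2 = r := by rw [hl]; linear_combination r * h200 - p * h201c
  set a := cj l * p with ha0
  set b := cj l * r with hb0
  have ha_herm : cj a = a := by
    simp only [ha0, _root_.map_mul, cjcj]
    linear_combination cj l * hkey_p - l * cj p * hll
  have hb : cj b = cj l * q := by
    simp only [hb0, _root_.map_mul, cjcj]
    linear_combination cj l * hkey_r - l * cj r * hll
  have hNp : p = l * a := by rw [ha0]; linear_combination (-p) * hll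
  have hNr : r = l * b := by rw [hb0]; linear_combination (-r) * hll
  have hNq : q = l * cj b := by rw [hb]; linear_combination (-q) * hll
  set α := a.re with hα0
  have haα : (α : ℂ) = a := by rwa [Complex.conj_eq_iff_re] at ha_herm
  have h1' : a * cj a + b * cj b = 1 := by
    simp only [ha0, hb0, _root_.map_mul, cjcj]
    linear_combination (p * cj p + r * cj r) * hll + h100
  have hbb : b * cj b = 1 - (α:ℂ)^2 := by
    rw [← haα] at h1'
    rw [cjreal] at h1'
    linear_combination h1'
  have hnsb : Complex.normSq b = 1 - α^2 := by
    have : ((Complex.normSq b : ℝ) : ℂ) = 1 - (α:ℂ)^2 := by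
      rw [← Complex.mul_conj]; exact hbb
    exact_mod_cast this
  have hα1 : α ≤ 1 := by nlinarith [Complex.normSq_nonneg b]
  clear_value a b
  rcases eq_or_lt_of_le hα1 with heq | hlt
  · -- α = 1 : N is already l • diag(1,-1)
    have hb0' : b = 0 := by
      have : Complex.normSq b = 0 := by rw [hnsb, heq]; ring
      exact Complex.normSq_eq_zero.mp this
    have ha1 : a = 1 := by rw [← haα, heq]; norm_num
    refine ⟨l, 1, hlnorm, by simp, by simp, ?_⟩
    have hN : N = l • !![1, 0; 0, -1] := by
      ext i j
      fin_cases i <;> fin_cases j <;>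
        simp [← hp0, ← hq0, ← hr0, hN11] <;>
        [skip; rw [hNq]; rw [hNr]; rw [hNp]] <;>
        simp [hb0', ha1, hNp]
    rw [hN]; simp
  · -- α < 1 : explicit diagonalizing W
    set t := Real.sqrt (2*(1-α)) with ht0
    have htpos : 0 < t := Real.sqrt_pos.2 (by linarith)
    have ht2 : t^2 = 2*(1-α) := Real.sq_sqrt (by linarith)
    have htc : ((t:ℝ):ℂ)^2 = 2*(1-(α:ℂ)) := by exact_mod_cast ht2
    clear_value t
    have htne : ((t:ℝ):ℂ) ≠ 0 := Complex.ofReal_ne_zero.mpr htpos.ne'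
    set W : Matrix (Fin 2) (Fin 2) ℂ :=
      !![cj b / t, ((α:ℂ)-1)/t; (1-(α:ℂ))/t, b/t] with hW0
    have hW1 : Wᴴ * W = 1 := by
      ext i j
      fin_cases i <;> fin_cases j <;>
        simp [hW0, Matrix.mul_apply, Fin.sum_univ_two, Matrix.one_apply,
            Matrix.conjTranspose_apply, map_div₀, map_sub, starcj, cjcj, cjreal] <;>
        field_simp <;>
        first
          | linear_combination hbb - htc
          | ring
    have hW2 : W * Wᴴ = 1 := mul_eq_one_comm.mp hW1
    have hNform : N = l • !![(α:ℂ), cj b; b, -(α:ℂ)] := by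
      ext i j
      fin_cases i <;> fin_cases j <;>
        simp [← hp0, ← hq0, ← hr0, hN11] <;>
        first
          | (rw [haα]; exact hNp)
          | exact hNq
          | exact hNr
    have hbb' : cj l * r * (l * cj r) = 1 - ((α:ℝ):ℂ)^2 := by
      have h := hbb
      rw [hb0] at h
      simp only [_root_.map_mul, cjcj] at h
      linear_combination h
    have key : N * W = W * (l • !![1, 0; 0, -1]) := by
      rw [hNform]
      ext i j
      fin_cases i <;> fin_cases j <;>
        simp [hW0, Matrix.mul_apply, Fin.sum_univ_two]
      · ring
      · linear_combination (l/((t:ℝ):ℂ)) * hbb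
      · linear_combination (l/((t:ℝ):ℂ)) * hbb
      · ring
    refine ⟨l, W, hlnorm, hW1, hW2, ?_⟩
    rw [Matrix.mul_assoc, key, ← Matrix.mul_assoc, hW1, Matrix.one_mul]

lemma mul_conj_one_of_sq {e z : ℂ} (he : e^2 = z) (hz : z * (starRingEnd ℂ) z = 1) :
    e * (starRingEnd ℂ) e = 1 := by
  have hsq : (e * (starRingEnd ℂ) e)^2 = 1 := by
    have h2 : ((starRingEnd ℂ) e)^2 = (starRingEnd ℂ) z := by rw [← map_pow, he]
    calc (e * (starRingEnd ℂ) e)^2 = e^2 * ((starRingEnd ℂ) e)^2 := by ring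
      _ = 1 := by rw [he, h2]; exact hz
  have hnn : e * (starRingEnd ℂ) e = ((Complex.normSq e : ℝ) : ℂ) := Complex.mul_conj e
  have h2' : (Complex.normSq e)^2 = 1 := by
    have : ((Complex.normSq e : ℝ) : ℂ)^2 = 1 := by rw [← hnn]; exact hsq
    exact_mod_cast this
  have h3' : Complex.normSq e = 1 := by nlinarith [Complex.normSq_nonneg e]
  rw [hnn, h3']; norm_num

lemma norm_one_of_mul_conj {e : ℂ} (h : e * (starRingEnd ℂ) e = 1) : ‖e‖ = 1 := by
  have hns : Complex.normSq e = 1 := by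
    have hnn : e * (starRingEnd ℂ) e = ((Complex.normSq e : ℝ) : ℂ) := Complex.mul_conj e
    rw [hnn] at h; exact_mod_cast h
  have : ‖e‖ ^ 2 = 1 := by rw [Complex.sq_norm]; exact hns
  have h0 : (0:ℝ) ≤ ‖e‖ := norm_nonneg e
  have hfac : (‖e‖ - 1) * (‖e‖ + 1) = 0 := by nlinarith
  rcases mul_eq_zero.1 hfac with h' | h'
  · linarith
  · linarith

section helpers
open Matrix

variable (W M N : Matrix (Fin 2) (Fin 2) ℂ)

lemma sandwich_ct : (Wᴴ * M * W)ᴴ = Wᴴ * Mᴴ * W := by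
  rw [Matrix.conjTranspose_mul, Matrix.conjTranspose_mul, Matrix.conjTranspose_conjTranspose,
    Matrix.mul_assoc]

lemma sandwich_mul (hW2 : W * Wᴴ = 1) :
    (Wᴴ * M * W) * (Wᴴ * N * W) = Wᴴ * (M * N) * W := by
  calc (Wᴴ * M * W) * (Wᴴ * N * W) = Wᴴ * M * (W * Wᴴ) * (N * W) := by
        simp only [Matrix.mul_assoc]
    _ = Wᴴ * (M * N) * W := by rw [hW2, Matrix.mul_one]; simp only [Matrix.mul_assoc]

lemma sandwich_trace (hW2 : W * Wᴴ = 1) : (Wᴴ * M * W).trace = M.trace := by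
  rw [Matrix.trace_mul_comm, ← Matrix.mul_assoc, hW2, Matrix.one_mul]

lemma sandwich_unitary (hW1 : Wᴴ * W = 1) (hW2 : W * Wᴴ = 1) (hM : Mᴴ * M = 1) :
    (Wᴴ * M * W)ᴴ * (Wᴴ * M * W) = 1 := by
  rw [sandwich_ct, sandwich_mul _ _ _ hW2, hM, Matrix.mul_one, hW1]

lemma sandwich_cross (hW2 : W * Wᴴ = 1) :
    ((Wᴴ * M * W)ᴴ * (Wᴴ * N * W)).trace = (Mᴴ * N).trace := by
  rw [sandwich_ct, sandwich_mul _ _ _ hW2, sandwich_trace _ _ hW2]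

end helpers

/-- The four Pauli matrices. -/
noncomputable def pauli : Fin 4 → Matrix (Fin 2) (Fin 2) ℂ
  | 0 => !![1, 0; 0, 1]
  | 1 => !![0, 1; 1, 0]
  | 2 => !![1, 0; 0, -1]
  | 3 => !![0, -Complex.I; Complex.I, 0]

/-- Every unitary error basis in dimension 2 is equivalent to the
Pauli basis. -/
theorem ueb_dim_two_equiv_pauli (A : Fin 4 → Matrix (Fin 2) (Fin 2) ℂ)
    (hU : ∀ i, A i ∈ Matrix.unitaryGroup (Fin 2) ℂ)
    (horth : ∀ i j, i ≠ j → Matrix.trace ((A i)ᴴ * A j) = 0) :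
    ∃ U ∈ Matrix.unitaryGroup (Fin 2) ℂ, ∃ V ∈ Matrix.unitaryGroup (Fin 2) ℂ,
      ∃ c : Fin 4 → ℂ, (∀ i, ‖c i‖ = 1) ∧
        (Set.range fun i => c i • (U * A i * V)) = Set.range pauli := by
  set cj := (starRingEnd ℂ)
  have cjcj : ∀ z : ℂ, cj (cj z) = z := fun z => Complex.conj_conj z
  have starcj : ∀ z : ℂ, star z = cj z := fun z => rfl
  -- unitarity of the A i, matrix form
  have hA1 : ∀ i, (A i)ᴴ * A i = 1 := fun i => by
    have := (Unitary.mem_iff.mp (hU i)).1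
    rwa [Matrix.star_eq_conjTranspose] at this
  have hA2 : ∀ i, A i * (A i)ᴴ = 1 := fun i => by
    have := (Unitary.mem_iff.mp (hU i)).2
    rwa [Matrix.star_eq_conjTranspose] at this
  -- the renormalized family N i = (A 0)ᴴ * A i
  set N : Fin 4 → Matrix (Fin 2) (Fin 2) ℂ := fun i => (A 0)ᴴ * A i with hN0
  have hNu1 : ∀ i, (N i)ᴴ * N i = 1 := fun i => by
    rw [hN0]
    calc ((A 0)ᴴ * A i)ᴴ * ((A 0)ᴴ * A i)
        = (A i)ᴴ * ((A 0)ᴴᴴ * (A 0)ᴴ) * A i := by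
          rw [Matrix.conjTranspose_mul]; simp only [Matrix.mul_assoc]
      _ = 1 := by
          rw [Matrix.conjTranspose_conjTranspose, hA2 0, Matrix.mul_one, hA1 i]
  have hNu2 : ∀ i, N i * (N i)ᴴ = 1 := fun i => by
    rw [hN0]
    calc ((A 0)ᴴ * A i) * ((A 0)ᴴ * A i)ᴴ
        = (A 0)ᴴ * (A i * (A i)ᴴ) * (A 0)ᴴᴴ := by
          rw [Matrix.conjTranspose_mul]; simp only [Matrix.mul_assoc]
      _ = 1 := by
          rw [hA2 i, Matrix.mul_one, Matrix.conjTranspose_conjTranspose, hA1 0]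
  have hNtr : ∀ i, i ≠ 0 → (N i).trace = 0 := fun i hi => by
    rw [hN0]; exact horth 0 i (Ne.symm hi)
  have hNcross : ∀ i j, i ≠ j → ((N i)ᴴ * N j).trace = 0 := fun i j hij => by
    rw [hN0]
    calc (((A 0)ᴴ * A i)ᴴ * ((A 0)ᴴ * A j)).trace
        = ((A i)ᴴ * ((A 0)ᴴᴴ * (A 0)ᴴ) * A j).trace := by
          rw [Matrix.conjTranspose_mul]; simp only [Matrix.mul_assoc]
      _ = 0 := by
          rw [Matrix.conjTranspose_conjTranspose, hA2 0, Matrix.mul_one]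
          exact horth i j hij
  -- diagonalize N 1
  obtain ⟨l, W, hlnorm, hW1, hW2, hdiag⟩ :=
    diag_traceless_unitary (N 1) (hNu1 1) (hNu2 1) (hNtr 1 (by decide))
  have hll : l * cj l = 1 := by
    rw [Complex.mul_conj]
    norm_cast
    rw [Complex.normSq_eq_norm_sq, hlnorm]; norm_num
  have hln0 : l ≠ 0 := fun h => by rw [h] at hlnorm; simp at hlnorm
  -- conjugated matrices
  set K2 : Matrix (Fin 2) (Fin 2) ℂ := Wᴴ * N 2 * W with hK2def
  set K3 : Matrix (Fin 2) (Fin 2) ℂ := Wᴴ * N 3 * W with hK3def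
  have hK2u : K2ᴴ * K2 = 1 := sandwich_unitary W (N 2) hW1 hW2 (hNu1 2)
  have hK3u : K3ᴴ * K3 = 1 := sandwich_unitary W (N 3) hW1 hW2 (hNu1 3)
  have htr2 : K2.trace = 0 := by
    rw [hK2def, sandwich_trace _ _ hW2]; exact hNtr 2 (by decide)
  have htr3 : K3.trace = 0 := by
    rw [hK3def, sandwich_trace _ _ hW2]; exact hNtr 3 (by decide)
  have hx12 : ((l • !![(1:ℂ), 0; 0, -1])ᴴ * K2).trace = 0 := by
    rw [← hdiag, hK2def, sandwich_cross _ _ _ hW2]; exact hNcross 1 2 (by decide)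
  have hx13 : ((l • !![(1:ℂ), 0; 0, -1])ᴴ * K3).trace = 0 := by
    rw [← hdiag, hK3def, sandwich_cross _ _ _ hW2]; exact hNcross 1 3 (by decide)
  have hx23 : (K2ᴴ * K3).trace = 0 := by
    rw [hK2def, hK3def, sandwich_cross _ _ _ hW2]; exact hNcross 2 3 (by decide)
  clear_value K2 K3
  -- entries of K2 and K3
  have hcl0 : cj l ≠ 0 := star_ne_zero.mpr hln0
  have diagzero : ∀ K : Matrix (Fin 2) (Fin 2) ℂ, K.trace = 0 →
      ((l • !![(1:ℂ), 0; 0, -1])ᴴ * K).trace = 0 → K 0 0 = 0 ∧ K 1 1 = 0 := by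
    intro K ht hx
    rw [Matrix.trace_fin_two] at ht
    simp [Matrix.trace_fin_two, Matrix.mul_apply, Fin.sum_univ_two,
      Matrix.conjTranspose_apply, Matrix.smul_apply, starcj] at hx
    constructor
    · apply mul_left_cancel₀ hcl0
      rw [mul_zero]
      linear_combination hx/2 + (cj l) * ht/2
    · apply mul_left_cancel₀ hcl0
      rw [mul_zero]
      linear_combination (cj l) * ht/2 - hx/2
  obtain ⟨hK200, hK211⟩ := diagzero K2 htr2 hx12
  obtain ⟨hK300, hK311⟩ := diagzero K3 htr3 hx13
  set q2 := K2 0 1 with hq2def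
  set r2 := K2 1 0 with hr2def
  set q3 := K3 0 1 with hq3def
  set r3 := K3 1 0 with hr3def
  have hq2 : cj q2 * q2 = 1 := by
    have := entry_eq hK2u 1 1
    simpa [Matrix.mul_apply, Fin.sum_univ_two, Matrix.one_apply,
      Matrix.conjTranspose_apply, starcj, hK211, ← hq2def] using this
  have hr2 : cj r2 * r2 = 1 := by
    have := entry_eq hK2u 0 0
    simpa [Matrix.mul_apply, Fin.sum_univ_two, Matrix.one_apply,
      Matrix.conjTranspose_apply, starcj, hK200, ← hr2def] using this
  have hq3 : cj q3 * q3 = 1 := by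
    have := entry_eq hK3u 1 1
    simpa [Matrix.mul_apply, Fin.sum_univ_two, Matrix.one_apply,
      Matrix.conjTranspose_apply, starcj, hK311, ← hq3def] using this
  have hr3 : cj r3 * r3 = 1 := by
    have := entry_eq hK3u 0 0
    simpa [Matrix.mul_apply, Fin.sum_univ_two, Matrix.one_apply,
      Matrix.conjTranspose_apply, starcj, hK300, ← hr3def] using this
  have hx23' : cj q2 * q3 + cj r2 * r3 = 0 := by
    rw [Matrix.trace_fin_two] at hx23
    simp [Matrix.mul_apply, Fin.sum_univ_two, Matrix.conjTranspose_apply, starcj,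
      hK200, hK211, hK300, hK311, ← hq2def, ← hr2def, ← hq3def, ← hr3def] at hx23
    linear_combination hx23
  clear_value q2 r2 q3 r3
  -- the phase e
  obtain ⟨e, he⟩ := exists_sqrt (q2 * cj r2)
  have hee : e * cj e = 1 := by
    refine mul_conj_one_of_sq he ?_
    have hcz : cj (q2 * cj r2) = cj q2 * r2 := by
      simp [_root_.map_mul, cjcj]
    rw [hcz]
    linear_combination (cj r2 * r2) * hq2 + hr2
  have hce : (cj e)^2 = cj q2 * r2 := by
    have := congrArg cj he
    simpa [map_pow, _root_.map_mul, cjcj] using this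
  -- the diagonal phase matrix
  set D : Matrix (Fin 2) (Fin 2) ℂ := !![1, 0; 0, e] with hDdef
  have hD2 : D * Dᴴ = 1 := by
    ext i j
    fin_cases i <;> fin_cases j <;>
      simp [hDdef, Matrix.mul_apply, Fin.sum_univ_two, Matrix.one_apply,
        Matrix.conjTranspose_apply, starcj] <;>
      linear_combination hee
  have hD1 : Dᴴ * D = 1 := mul_eq_one_comm.mp hD2
  -- the conjugating unitaries
  set U : Matrix (Fin 2) (Fin 2) ℂ := D * Wᴴ * (A 0)ᴴ with hUdef
  set V : Matrix (Fin 2) (Fin 2) ℂ := W * Dᴴ with hVdef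
  have hWm : W ∈ Matrix.unitaryGroup (Fin 2) ℂ := by
    rw [Matrix.mem_unitaryGroup_iff, Matrix.star_eq_conjTranspose]; exact hW2
  have hDm : D ∈ Matrix.unitaryGroup (Fin 2) ℂ := by
    rw [Matrix.mem_unitaryGroup_iff, Matrix.star_eq_conjTranspose]; exact hD2
  have hUm : U ∈ Matrix.unitaryGroup (Fin 2) ℂ := by
    rw [hUdef]
    exact mul_mem (mul_mem hDm (Unitary.star_mem hWm)) (Unitary.star_mem (hU 0))
  have hVm : V ∈ Matrix.unitaryGroup (Fin 2) ℂ := by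
    rw [hVdef]
    exact mul_mem hWm (Unitary.star_mem hDm)
  have hUAV : ∀ i, U * A i * V = D * (Wᴴ * N i * W) * Dᴴ := by
    intro i
    rw [hUdef, hVdef, hN0]
    simp only [Matrix.mul_assoc]
  -- the scalars
  have eq0 : (1:ℂ) • (U * A 0 * V) = pauli 0 := by
    rw [one_smul, hUAV 0]
    have hN00 : N 0 = 1 := by rw [hN0]; exact hA1 0
    rw [hN00, Matrix.mul_one, hW1, Matrix.mul_one, hD2]
    rw [show pauli 0 = !![(1:ℂ),0;0,1] from rfl, ← Matrix.one_fin_two]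
  have eq1 : cj l • (U * A 1 * V) = pauli 2 := by
    rw [hUAV 1, hdiag, Matrix.mul_smul, Matrix.smul_mul, smul_smul,
      show cj l * l = 1 by linear_combination hll, one_smul]
    ext i j
    fin_cases i <;> fin_cases j <;>
      simp [hDdef, Matrix.mul_apply, Fin.sum_univ_two, Matrix.conjTranspose_apply,
        starcj, pauli]
    exact hee
  have hx23c : q2 * cj q3 + r2 * cj r3 = 0 := by
    have := congrArg cj hx23'
    simpa [map_add, _root_.map_mul, cjcj] using this
  have hD00 : D 0 0 = 1 := by rw [hDdef]; rfl
  have hD01 : D 0 1 = 0 := by rw [hDdef]; rfl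
  have hD10 : D 1 0 = 0 := by rw [hDdef]; rfl
  have hD11 : D 1 1 = e := by rw [hDdef]; rfl
  clear_value D
  have eq2 : cj (r2 * e) • (U * A 2 * V) = pauli 1 := by
    rw [hUAV 2, ← hK2def]
    ext i j
    fin_cases i <;> fin_cases j <;>
      simp [Matrix.mul_apply, Fin.sum_univ_two, Matrix.conjTranspose_apply,
        starcj, pauli, hK200, hK211, ← hq2def, ← hr2def, _root_.map_mul, cjcj,
        hD00, hD01, hD10, hD11]
    · linear_combination (cj r2 * q2) * hce + (cj r2 * r2) * hq2 + hr2
    · linear_combination (r2 * cj r2) * hee + hr2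
  have hcjI : cj Complex.I = -Complex.I := Complex.conj_I
  have eq3 : cj (Complex.I * q3 * cj e) • (U * A 3 * V) = pauli 3 := by
    rw [hUAV 3, ← hK3def]
    ext i j
    fin_cases i <;> fin_cases j <;>
      simp [Matrix.mul_apply, Fin.sum_univ_two, Matrix.conjTranspose_apply,
        starcj, pauli, hK300, hK311, ← hq3def, ← hr3def, _root_.map_mul, cjcj,
        hD00, hD01, hD10, hD11, hcjI]
    · linear_combination (Complex.I * q3 * cj q3) * hee + Complex.I * hq3
    · linear_combination (-Complex.I * cj q3 * r3) * he + (-Complex.I * r3 * cj r2) * hx23c +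
        (Complex.I * r3 * cj r3) * hr2 + Complex.I * hr3
  -- assemble
  have hnormconj : ∀ z : ℂ, ‖cj z‖ = ‖z‖ := fun z => by
    exact Complex.norm_conj z
  refine ⟨U, hUm, V, hVm, ![1, cj l, cj (r2 * e), cj (Complex.I * q3 * cj e)], ?_, ?_⟩
  · intro i
    fin_cases i
    · simp
    · simpa [hnormconj] using hlnorm
    · have h1 : ‖r2‖ = 1 := norm_one_of_mul_conj (by linear_combination hr2)
      have h2 : ‖e‖ = 1 := norm_one_of_mul_conj hee
      simp [hnormconj, norm_mul, h1, h2]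
    · have h1 : ‖q3‖ = 1 := norm_one_of_mul_conj (by linear_combination hq3)
      have h2 : ‖e‖ = 1 := norm_one_of_mul_conj hee
      simp [hnormconj, norm_mul, h1, h2]
  · have hptw : ∀ i : Fin 4,
        (![1, cj l, cj (r2 * e), cj (Complex.I * q3 * cj e)] i) • (U * A i * V)
          = pauli (![0, 2, 1, 3] i) := by
      intro i
      fin_cases i
      · simpa using eq0
      · simpa using eq1
      · simpa using eq2
      · simpa using eq3
    have hfeq : (fun i => (![1, cj l, cj (r2 * e), cj (Complex.I * q3 * cj e)] i) •
        (U * A i * V)) = pauli ∘ ![0, 2, 1, 3] := funext fun i => hptw i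
    rw [hfeq, Set.range_comp]
    have hsurj : Function.Surjective ![(0 : Fin 4), 2, 1, 3] := by decide
    rw [Set.range_eq_univ.mpr hsurj, Set.image_univ]
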